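/- Let K_{2*n} denote the complete multipartite graph with n parts each of size 2. Then AT(K_{2*n}) = n. -/

import Mathlib

open MvPolynomial Finset

/-- The graph polynomial `P_G = ∏_{(i,j) ∈ E, i < j} (xᵢ - xⱼ)`. -/
noncomputable def graphPoly {V : Type} [Fintype V] [LinearOrder V] (G : SimpleGraph V)
    [DecidableRel G.Adj] : MvPolynomial V ℝ :=
  ∏ p ∈ Finset.univ.filter (fun p : V × V => p.1 < p.2 ∧ G.Adj p.1 p.2), (X p.1 - X p.2)

/-- `G` is Alon–Tarsi `k`-choosable: `P_G` has a monomial with non-zero coefficient all of whose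
exponents are at most `k - 1`. -/
def IsAT {V : Type} [Fintype V] [LinearOrder V] (G : SimpleGraph V) [DecidableRel G.Adj]
    (k : ℕ) : Prop :=
  ∃ t : V →₀ ℕ, (graphPoly G).coeff t ≠ 0 ∧ ∀ i, t i + 1 ≤ k

/-- The Alon–Tarsi number of `G`: the least `k` such that `G` is Alon–Tarsi `k`-choosable. -/
noncomputable def ATnum {V : Type} [Fintype V] [LinearOrder V] (G : SimpleGraph V)
    [DecidableRel G.Adj] : ℕ :=
  sInf {k | IsAT G k}

/-- The complete multipartite graph `K_{2*n}` with `n` parts each of size `2`: vertices are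
`Fin (2 * n)`, the parts are `{2i, 2i+1}`, and two vertices are adjacent iff they lie in
different parts. -/
def K2n (n : ℕ) : SimpleGraph (Fin (2 * n)) :=
  SimpleGraph.fromRel fun i j => (i : ℕ) / 2 ≠ (j : ℕ) / 2

instance (n : ℕ) : DecidableRel (K2n n).Adj := fun i j =>
  decidable_of_iff _ (SimpleGraph.fromRel_adj _ i j).symm

-- ===== auxiliary development =====


theorem negpow (a b : ℕ) (h : b ≤ a) : (-1:ℝ)^(a-b) * (-1)^b = (-1)^a := by
  rw [← pow_add]; congr 1; omega

theorem altsum (k : ℕ) (hk : k ≠ 0) :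
    ∑ m ∈ range (k+1), (-1:ℝ)^(k-m) * (k.choose m) = 0 := by
  have h := Int.alternating_sum_range_choose_of_ne hk
  have h2 : ((∑ i ∈ range (k + 1), (-1:ℤ) ^ i * (k.choose i) : ℤ) : ℝ) = 0 := by
    rw [h]; norm_num
  push_cast at h2
  calc ∑ m ∈ range (k+1), (-1:ℝ)^(k-m) * (k.choose m)
      = ∑ m ∈ range (k+1), (-1:ℝ)^k * ((-1)^m * (k.choose m)) := by
        refine Finset.sum_congr rfl fun m hm => ?_
        rw [mem_range] at hm
        have h1 := negpow k m (by omega)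
        have h2 : ((-1:ℝ)^m * (-1:ℝ)^m) = 1 := by
          rw [← pow_add]
          exact Even.neg_one_pow (Even.add_self m)
        calc (-1:ℝ)^(k-m) * (k.choose m)
            = ((-1:ℝ)^(k-m) * (-1)^m) * (-1)^m * (k.choose m) := by
              rw [mul_assoc ((-1:ℝ)^(k-m)), h2, mul_one]
          _ = (-1:ℝ)^k * ((-1)^m * (k.choose m)) := by rw [h1]; ring
    _ = (-1:ℝ)^k * ∑ m ∈ range (k+1), (-1:ℝ)^m * (k.choose m) := by
        rw [Finset.mul_sum]
    _ = 0 := by rw [h2, mul_zero]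

theorem Tlem (d : ℕ) : ∀ e : ℕ, e ≤ d →
    ∑ m ∈ range (d+1), (-1:ℝ)^(d-m) * (d.choose m) * (m:ℝ)^e
      = if e = d then (d.factorial : ℝ) else 0 := by
  induction d with
  | zero => intro e he; interval_cases e; simp
  | succ d ih =>
    intro e he
    match e with
    | 0 =>
      simp only [pow_zero, mul_one]
      rw [altsum (d+1) (Nat.succ_ne_zero d)]
      simp [(Nat.succ_ne_zero d).symm]
    | e+1 =>
      have he' : e ≤ d := by omega
      have key : ∑ m ∈ range (d+2), (-1:ℝ)^(d+1-m) * ((d+1).choose m) * (m:ℝ)^(e+1)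
          = (d+1) * ∑ i ∈ range (e+1), (e.choose i : ℝ) *
              ∑ m ∈ range (d+1), (-1:ℝ)^(d-m) * (d.choose m) * (m:ℝ)^i := by
        rw [Finset.sum_range_succ']
        simp only [Nat.cast_zero, zero_pow (Nat.succ_ne_zero e), mul_zero, add_zero, Nat.cast_add,
          Nat.cast_one]
        have step1 : ∀ j ∈ range (d+1), (-1:ℝ)^(d+1-(j+1)) * ((d+1).choose (j+1)) * ((j:ℝ)+1)^(e+1)
            = (d+1) * ((-1:ℝ)^(d-j) * (d.choose j) * ∑ i ∈ range (e+1), (e.choose i) * (j:ℝ)^i) := by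
          intro j hj
          have hc : ((d+1).choose (j+1) : ℝ) * ((j:ℝ)+1) = ((d:ℝ)+1) * (d.choose j) := by
            have h3 : ((d+1) * (d.choose j) : ℕ) = ((d+1).choose (j+1)) * (j+1) :=
              Nat.add_one_mul_choose_eq d j
            exact_mod_cast (congrArg (fun x : ℕ => (x:ℝ)) h3).symm
          have hbin : ((j:ℝ)+1)^e = ∑ i ∈ range (e+1), (e.choose i) * (j:ℝ)^i := by
            rw [add_pow]
            refine Finset.sum_congr rfl fun i hi => ?_
            ring
          have hexp : d+1-(j+1) = d - j := by omega
          have hpow : ((j:ℝ)+1)^(e+1) = (∑ i ∈ range (e+1), (e.choose i) * (j:ℝ)^i) * ((j:ℝ)+1) := by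
            rw [← hbin]; ring
          rw [hexp, hpow]
          linear_combination ((-1:ℝ)^(d-j) * (∑ i ∈ range (e+1), (e.choose i) * (j:ℝ)^i)) * hc
        rw [Finset.sum_congr rfl step1, ← Finset.mul_sum]
        congr 1
        simp_rw [Finset.mul_sum]
        rw [Finset.sum_comm]
        refine Finset.sum_congr rfl fun i _ => Finset.sum_congr rfl fun j _ => by ring
      rw [key]
      by_cases hed : e = d
      · subst hed
        rw [Finset.sum_congr rfl (fun i hi => by
          rw [ih i (by rw [mem_range] at hi; omega)])]
        simp only [mul_ite, mul_zero]
        rw [Finset.sum_ite_eq' (range (e+1)) e (fun i => (e.choose i : ℝ) * (e.factorial))]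
        simp [Nat.factorial_succ]
      · rw [Finset.sum_congr rfl (fun i hi => by
          rw [ih i (by rw [mem_range] at hi; omega), if_neg (by rw [mem_range] at hi; omega)])]
        simp [hed]

namespace ATK2n

variable (N : ℕ)

lemma adj_iff (i j : Fin (2*(N+1))) :
    (K2n (N+1)).Adj i j ↔ i ≠ j ∧ (i : ℕ)/2 ≠ (j : ℕ)/2 := by
  rw [K2n, SimpleGraph.fromRel_adj]
  constructor
  · rintro ⟨h1, h2 | h2⟩
    · exact ⟨h1, h2⟩
    · exact ⟨h1, h2.symm⟩
  · rintro ⟨h1, h2⟩; exact ⟨h1, Or.inl h2⟩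

/-- edge set -/
def A : Finset (Fin (2*(N+1)) × Fin (2*(N+1))) :=
  Finset.univ.filter (fun p => p.1 < p.2 ∧ (K2n (N+1)).Adj p.1 p.2)

/-- ordered pairs of parts -/
def B : Finset (Fin (N+1) × Fin (N+1)) :=
  Finset.univ.filter (fun q => q.1 < q.2)

lemma mem_A (p : Fin (2*(N+1)) × Fin (2*(N+1))) :
    p ∈ A N ↔ (p.1 : ℕ) < (p.2 : ℕ) ∧ (p.1 : ℕ)/2 ≠ (p.2 : ℕ)/2 := by
  simp only [A, mem_filter, mem_univ, true_and, adj_iff, Fin.lt_def]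
  constructor
  · rintro ⟨h1, _, h3⟩; exact ⟨h1, h3⟩
  · rintro ⟨h1, h2⟩; exact ⟨h1, fun h => by simp [h] at h1, h2⟩

def emb : (Fin (N+1) × Fin (N+1)) × (Fin 2 × Fin 2) → Fin (2*(N+1)) × Fin (2*(N+1)) :=
  fun x => (⟨2*x.1.1.val + x.2.1.val, by have := x.1.1.isLt; have := x.2.1.isLt; omega⟩,
            ⟨2*x.1.2.val + x.2.2.val, by have := x.1.2.isLt; have := x.2.2.isLt; omega⟩)

def dec : Fin (2*(N+1)) × Fin (2*(N+1)) → (Fin (N+1) × Fin (N+1)) × (Fin 2 × Fin 2) :=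
  fun p => ((⟨p.1.val / 2, by have := p.1.isLt; omega⟩, ⟨p.2.val / 2, by have := p.2.isLt; omega⟩),
            (⟨p.1.val % 2, by omega⟩, ⟨p.2.val % 2, by omega⟩))

lemma emb_mem (x : (Fin (N+1) × Fin (N+1)) × (Fin 2 × Fin 2)) (hx : x ∈ B N ×ˢ univ) :
    emb N x ∈ A N := by
  obtain ⟨⟨a, b⟩, ⟨s, t⟩⟩ := x
  simp only [B, mem_product, mem_filter, mem_univ, true_and, Fin.lt_def] at hx
  rw [mem_A]
  simp only [emb]
  have hs := s.isLt; have ht := t.isLt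
  constructor
  · omega
  · have h1 : (2*a.val + s.val)/2 = a.val := by omega
    have h2 : (2*b.val + t.val)/2 = b.val := by omega
    omega

lemma dec_mem (p : Fin (2*(N+1)) × Fin (2*(N+1))) (hp : p ∈ A N) : dec N p ∈ B N ×ˢ univ := by
  rw [mem_A] at hp
  simp only [B, dec, mem_product, mem_filter, mem_univ, true_and, and_true, Fin.lt_def]
  omega

lemma dec_emb (x : (Fin (N+1) × Fin (N+1)) × (Fin 2 × Fin 2)) (hx : x ∈ B N ×ˢ univ) :
    dec N (emb N x) = x := by
  obtain ⟨⟨a, b⟩, ⟨s, t⟩⟩ := x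
  have hs := s.isLt; have ht := t.isLt
  simp only [dec, emb, Prod.mk.injEq, Fin.ext_iff]
  refine ⟨⟨?_, ?_⟩, ?_, ?_⟩ <;> omega

lemma emb_dec (p : Fin (2*(N+1)) × Fin (2*(N+1))) (hp : p ∈ A N) : emb N (dec N p) = p := by
  obtain ⟨p1, p2⟩ := p
  simp only [emb, dec, Prod.mk.injEq, Fin.ext_iff]
  constructor <;> omega

lemma prod_A {M : Type*} [CommMonoid M] (f : Fin (2*(N+1)) × Fin (2*(N+1)) → M) :
    ∏ p ∈ A N, f p = ∏ q ∈ B N, ∏ st : Fin 2 × Fin 2, f (emb N (q, st)) := by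
  rw [← Finset.prod_product']
  exact Finset.prod_nbij' (dec N) (emb N) (dec_mem N) (emb_mem N) (emb_dec N) (dec_emb N)
    (fun p hp => by rw [emb_dec N p hp])

lemma card_A : (A N).card = 2*(N+1)*N := by
  have h1 : (A N).card = (B N ×ˢ (univ : Finset (Fin 2 × Fin 2))).card :=
    Finset.card_nbij' (dec N) (emb N) (dec_mem N) (emb_mem N) (emb_dec N) (dec_emb N)
  have h2 : (B N ×ˢ (univ : Finset (Fin 2 × Fin 2))).card = (B N).card * 4 := by
    rw [Finset.card_product]; simp
  -- 2 * card B = (N+1)*N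
  have h3 : 2 * (B N).card = (N+1) * N := by
    have hswap : (B N).card = (univ.filter (fun q : Fin (N+1) × Fin (N+1) => q.2 < q.1)).card := by
      refine Finset.card_nbij' Prod.swap Prod.swap ?_ ?_ ?_ ?_ <;>
        simp [B, Prod.swap, mem_filter, Set.MapsTo, Set.LeftInvOn, Set.RightInvOn]
    have hunion : (B N) ∪ (univ.filter (fun q : Fin (N+1) × Fin (N+1) => q.2 < q.1))
        = univ.filter (fun q : Fin (N+1) × Fin (N+1) => q.1 ≠ q.2) := by
      rw [B, ← Finset.filter_or]
      congr 1
      ext q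
      exact ne_iff_lt_or_gt.symm
    have hdisj : Disjoint (B N) (univ.filter (fun q : Fin (N+1) × Fin (N+1) => q.2 < q.1)) := by
      rw [Finset.disjoint_left]
      intro q hq hq'
      simp only [B, mem_filter] at hq
      simp only [mem_filter] at hq'
      exact absurd hq.2 (not_lt_of_gt hq'.2)
    have hcard := Finset.card_union_of_disjoint hdisj
    rw [hunion] at hcard
    have hne : (univ.filter (fun q : Fin (N+1) × Fin (N+1) => q.1 ≠ q.2)).card
        = (N+1)*(N+1) - (N+1) := by
      have : (univ.filter (fun q : Fin (N+1) × Fin (N+1) => q.1 ≠ q.2))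
          = (univ : Finset (Fin (N+1))).offDiag := by
        ext q; simp [Finset.mem_offDiag]
      rw [this, Finset.offDiag_card]
      simp
    rw [hne, ← hswap] at hcard
    have hmul : (N+1)*(N+1) = (N+1)*N + (N+1) := by ring
    omega
  have hmul2 : 2*((N+1)*N) = 2*(N+1)*N := by ring
  omega


def embV : Fin (N+1) × Fin 2 → Fin (2*(N+1)) :=
  fun x => ⟨2*x.1.val + x.2.val, by have := x.1.isLt; have := x.2.isLt; omega⟩

def decV : Fin (2*(N+1)) → Fin (N+1) × Fin 2 :=
  fun v => (⟨v.val / 2, by have := v.isLt; omega⟩, ⟨v.val % 2, by omega⟩)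

lemma prod_V {M : Type*} [CommMonoid M] (f : Fin (2*(N+1)) → M) :
    ∏ v, f v = ∏ a : Fin (N+1), ∏ s : Fin 2, f (embV N (a, s)) := by
  rw [← Finset.prod_product']
  refine Finset.prod_nbij' (decV N) (embV N) (fun _ _ => mem_univ _) (fun _ _ => mem_univ _)
    ?_ ?_ ?_
  · intro v _
    simp only [embV, decV, Fin.ext_iff]
    omega
  · intro x _
    obtain ⟨a, s⟩ := x
    have := s.isLt
    simp only [embV, decV, Prod.mk.injEq, Fin.ext_iff]
    constructor <;> omega
  · intro v hv
    congr 1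
    simp only [embV, decV, Fin.ext_iff]
    omega

lemma hom : (graphPoly (K2n (N+1))).IsHomogeneous ((A N).card) := by
  have h := MvPolynomial.IsHomogeneous.prod (A N)
    (fun p => (X p.1 - X p.2 : MvPolynomial (Fin (2*(N+1))) ℝ)) (fun _ => 1)
    (fun p _ => (isHomogeneous_X _ _).sub (isHomogeneous_X _ _))
  rw [Finset.sum_const, smul_eq_mul, mul_one] at h
  exact h

lemma support_sum (t : Fin (2*(N+1)) →₀ ℕ) (ht : t ∈ (graphPoly (K2n (N+1))).support) :
    ∑ v, t v = (A N).card := by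
  have h := hom N (MvPolynomial.mem_support_iff.mp ht)
  rw [← h, Finsupp.weight_apply]
  rw [Finsupp.sum]
  rw [Finset.sum_subset (Finset.subset_univ t.support)
    (fun x _ hx => by simp [Finsupp.notMem_support_iff.mp hx])]
  refine Finset.sum_congr rfl fun v _ => ?_
  simp

def wt : ℕ → ℝ := fun m => (-1)^(N-m) * (N.choose m)

lemma wt_ne_zero (m : ℕ) (hm : m ≤ N) : wt N m ≠ 0 := by
  simp only [wt]
  refine mul_ne_zero ?_ ?_
  · exact pow_ne_zero _ (by norm_num)
  · exact_mod_cast Nat.choose_pos hm |>.ne'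

lemma L1 (e : ℕ) (he : e ≤ N) :
    ∑ m : Fin (N+1), ((m : ℕ) : ℝ)^e * wt N (m : ℕ)
      = if e = N then (N.factorial : ℝ) else 0 := by
  rw [Fin.sum_univ_eq_sum_range (fun m => ((m : ℕ) : ℝ)^e * wt N m) (N+1)]
  rw [← Tlem N e he]
  exact Finset.sum_congr rfl fun m _ => by simp only [wt]; ring

noncomputable def top : Fin (2*(N+1)) →₀ ℕ := Finsupp.equivFunOnFinite.symm (fun _ => N)

lemma top_apply (v : Fin (2*(N+1))) : top N v = N := rfl

lemma graphPoly_eq : graphPoly (K2n (N+1)) = ∏ p ∈ A N, (X p.1 - X p.2) := rfl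

lemma eval_graphPoly (x : Fin (2*(N+1)) → ℝ) :
    eval x (graphPoly (K2n (N+1))) = ∏ p ∈ A N, (x p.1 - x p.2) := by
  rw [graphPoly_eq, map_prod]
  refine Finset.prod_congr rfl fun p _ => ?_
  rw [map_sub, eval_X, eval_X]

lemma term_pos (c : Fin (2*(N+1)) → Fin (N+1)) (hc : ∀ p ∈ A N, c p.1 ≠ c p.2) :
    0 < eval (fun v => ((c v : ℕ) : ℝ)) (graphPoly (K2n (N+1))) * ∏ v, wt N (c v) := by
  set φ : Fin (N+1) → Fin (N+1) := fun a => c (embV N (a, 0)) with hφ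
  have hembV : ∀ (a : Fin (N+1)) (s : Fin 2), ((embV N (a, s) : Fin (2*(N+1))) : ℕ) = 2*a.val + s.val :=
    fun a s => rfl
  have hlt : ∀ a b : Fin (N+1), a.val < b.val → c (embV N (a, 0)) ≠ c (embV N (b, 0)) := by
    intro a b hab
    refine hc (embV N (a, 0), embV N (b, 0)) ?_
    rw [mem_A]
    simp only [hembV]
    constructor <;> omega
  have hφinj : Function.Injective φ := by
    intro a b heq
    by_contra hne
    rcases lt_trichotomy a.val b.val with h | h | h
    · exact hlt a b h heq
    · exact hne (Fin.ext h)
    · exact hlt b a h heq.symm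
  have hφsurj : Function.Surjective φ := Finite.surjective_of_injective hφinj
  have hkey : ∀ v : Fin (2*(N+1)), c v = φ ((decV N v).1) := by
    intro v
    have hdecval : (((decV N v).1 : Fin (N+1)) : ℕ) = v.val / 2 := rfl
    by_cases hpar : v.val % 2 = 0
    · congr 1
      simp only [embV, Fin.ext_iff, hdecval]
      omega
    · -- v is odd; let u be its even partner
      by_contra hne
      obtain ⟨b, hb⟩ := hφsurj (c v)
      have hbne : b ≠ (decV N v).1 := by
        intro h; rw [h] at hb; exact hne hb.symm
      have hparts : 2*b.val/2 ≠ v.val/2 := by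
        have : (2*b.val)/2 = b.val := by omega
        rw [this]
        intro h
        exact hbne (Fin.ext (by rw [hdecval]; exact h))
      have hvb : ((embV N (b, 0) : Fin (2*(N+1))) : ℕ) = 2*b.val := by simp [hembV]
      rcases lt_trichotomy (2*b.val) v.val with h | h | h
      · have := hc (embV N (b, 0), v) (by rw [mem_A]; rw [hvb]; exact ⟨h, hparts⟩)
        exact this hb
      · exact absurd (by rw [h] : 2*(b:ℕ)/2 = (v:ℕ)/2) hparts
      · have := hc (v, embV N (b, 0)) (by rw [mem_A]; rw [hvb]; exact ⟨h, fun hh => hparts hh.symm⟩)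
        exact this hb.symm
  have hc_emb : ∀ (a : Fin (N+1)) (s : Fin 2), c (embV N (a, s)) = φ a := by
    intro a s
    rw [hkey (embV N (a, s))]
    congr 1
    have hs := s.isLt
    simp only [decV, embV, Fin.ext_iff]
    omega
  -- evaluate the polynomial
  have heval : eval (fun v => ((c v : ℕ) : ℝ)) (graphPoly (K2n (N+1)))
      = ∏ q ∈ B N, (((φ q.1 : ℕ) : ℝ) - ((φ q.2 : ℕ) : ℝ))^4 := by
    rw [eval_graphPoly, prod_A]
    refine Finset.prod_congr rfl fun q hq => ?_
    have : ∀ st : Fin 2 × Fin 2,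
        ((c ((emb N (q, st)).1) : ℕ) : ℝ) - ((c ((emb N (q, st)).2) : ℕ) : ℝ)
          = ((φ q.1 : ℕ) : ℝ) - ((φ q.2 : ℕ) : ℝ) := by
      intro st
      have h1 : (emb N (q, st)).1 = embV N (q.1, st.1) := rfl
      have h2 : (emb N (q, st)).2 = embV N (q.2, st.2) := rfl
      rw [h1, h2, hc_emb, hc_emb]
    rw [Finset.prod_congr rfl (fun st _ => this st), Finset.prod_const]
    congr 1
  have hwprod : ∏ v, wt N (c v) = ∏ a : Fin (N+1), (wt N (φ a))^2 := by
    rw [prod_V N (fun v => wt N (c v))]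
    refine Finset.prod_congr rfl fun a _ => ?_
    rw [Finset.prod_congr rfl (fun s _ => by rw [hc_emb a s]), Finset.prod_const]
    congr 1
  rw [heval, hwprod]
  apply mul_pos
  · refine Finset.prod_pos fun q hq => ?_
    refine Even.pow_pos (by decide) ?_
    have hne : φ q.1 ≠ φ q.2 := by
      simp only [B, mem_filter] at hq
      exact fun h => (ne_of_lt hq.2) (hφinj h)
    intro h
    apply hne
    apply Fin.ext
    exact_mod_cast sub_eq_zero.mp h
  · refine Finset.prod_pos fun a _ => ?_
    exact Even.pow_pos even_two (wt_ne_zero N _ (by omega))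

lemma L_eq :
    ∑ c : Fin (2*(N+1)) → Fin (N+1),
        (eval (fun v => ((c v : ℕ) : ℝ)) (graphPoly (K2n (N+1)))) * ∏ v, wt N (c v)
      = (graphPoly (K2n (N+1))).coeff (top N) * ((N.factorial : ℝ))^(2*(N+1)) := by
  set P := graphPoly (K2n (N+1)) with hP
  have h1 : ∀ c : Fin (2*(N+1)) → Fin (N+1),
      (eval (fun v => ((c v : ℕ) : ℝ)) P) * ∏ v, wt N (c v)
        = ∑ t ∈ P.support, P.coeff t * ∏ v, (((c v : ℕ) : ℝ)^(t v) * wt N (c v)) := by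
    intro c
    rw [eval_eq', Finset.sum_mul]
    refine Finset.sum_congr rfl fun t _ => ?_
    rw [mul_assoc, ← Finset.prod_mul_distrib]
  rw [Finset.sum_congr rfl (fun c _ => h1 c), Finset.sum_comm]
  have h3 : ∀ t : Fin (2*(N+1)) →₀ ℕ,
      ∑ c : Fin (2*(N+1)) → Fin (N+1), ∏ v, (((c v : ℕ) : ℝ)^(t v) * wt N (c v))
        = ∏ v, ∑ m : Fin (N+1), ((m : ℕ) : ℝ)^(t v) * wt N (m : ℕ) :=
    fun t => (Fintype.prod_sum (fun v (m : Fin (N+1)) => ((m : ℕ) : ℝ)^(t v) * wt N (m : ℕ))).symm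
  rw [Finset.sum_congr rfl (fun t _ => by rw [← Finset.mul_sum, h3 t])]
  rw [Finset.sum_eq_single (top N)]
  · congr 1
    have : ∀ v : Fin (2*(N+1)), ∑ m : Fin (N+1), ((m : ℕ) : ℝ)^(top N v) * wt N (m : ℕ)
        = (N.factorial : ℝ) := by
      intro v
      rw [top_apply, L1 N N le_rfl, if_pos rfl]
    rw [Finset.prod_congr rfl (fun v _ => this v), Finset.prod_const]
    congr 1
    simp
  · intro t ht hne
    have hsum : ∑ v, t v = 2*(N+1)*N := by rw [support_sum N t ht, card_A]
    by_cases hex : ∀ v, N ≤ t v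
    · exfalso
      apply hne
      have hall : ∀ v, t v = N := by
        by_contra hvne
        push_neg at hvne
        obtain ⟨v0, hv0⟩ := hvne
        have hlt : ∑ v : Fin (2*(N+1)), (N : ℕ) < ∑ v, t v :=
          Finset.sum_lt_sum (fun v _ => hex v) ⟨v0, mem_univ v0, lt_of_le_of_ne (hex v0) (Ne.symm hv0)⟩
        rw [Finset.sum_const, smul_eq_mul, card_univ, Fintype.card_fin, hsum] at hlt
        omega
      ext v
      rw [hall v, top_apply]
    · push_neg at hex
      obtain ⟨v0, hv0⟩ := hex
      rw [Finset.prod_eq_zero (mem_univ v0), mul_zero]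
      rw [L1 N (t v0) (le_of_lt hv0), if_neg (ne_of_lt hv0)]
  · intro h
    rw [MvPolynomial.notMem_support_iff.mp h, zero_mul]

theorem coeff_top_pos : 0 < (graphPoly (K2n (N+1))).coeff (top N) := by
  have hL := L_eq N
  have hpos : 0 < ∑ c : Fin (2*(N+1)) → Fin (N+1),
      (eval (fun v => ((c v : ℕ) : ℝ)) (graphPoly (K2n (N+1)))) * ∏ v, wt N (c v) := by
    refine Finset.sum_pos' ?_ ?_
    · intro c _
      by_cases hc : ∀ p ∈ A N, c p.1 ≠ c p.2
      · exact le_of_lt (term_pos N c hc)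
      · push_neg at hc
        obtain ⟨p, hp, hcp⟩ := hc
        rw [eval_graphPoly, Finset.prod_eq_zero hp (by rw [hcp, sub_self]), zero_mul]
    · refine ⟨fun v => (decV N v).1, mem_univ _, term_pos N _ ?_⟩
      intro p hp
      rw [mem_A] at hp
      intro h
      exact hp.2 (congrArg Fin.val h)
  rw [hL] at hpos
  have hK : (0:ℝ) < (N.factorial : ℝ)^(2*(N+1)) :=
    pow_pos (by exact_mod_cast N.factorial_pos) _
  rcases mul_pos_iff.mp hpos with ⟨h, _⟩ | ⟨_, h⟩
  · exact h
  · linarith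

theorem isAT_upper : IsAT (K2n (N+1)) (N+1) :=
  ⟨top N, ne_of_gt (coeff_top_pos N), fun v => by rw [top_apply]⟩

theorem isAT_lower (k : ℕ) (h : IsAT (K2n (N+1)) k) : N+1 ≤ k := by
  obtain ⟨t, h0, h1⟩ := h
  have hs : ∑ v, t v = 2*(N+1)*N := by
    rw [support_sum N t (MvPolynomial.mem_support_iff.mpr h0), card_A]
  have hle : ∑ v : Fin (2*(N+1)), (t v + 1) ≤ ∑ v : Fin (2*(N+1)), k :=
    Finset.sum_le_sum (fun v _ => h1 v)
  rw [Finset.sum_add_distrib, Finset.sum_const, Finset.sum_const, smul_eq_mul, smul_eq_mul,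
    card_univ, Fintype.card_fin, hs, mul_one] at hle
  have h2 : 2*(N+1)*(N+1) ≤ 2*(N+1)*k := by
    calc 2*(N+1)*(N+1) = 2*(N+1)*N + 2*(N+1) := by ring
    _ ≤ 2*(N+1)*k := hle
  exact Nat.le_of_mul_le_mul_left h2 (by omega)

end ATK2n


/-- `AT(K_{2*n}) = n`. -/
theorem AT_K2n (n : ℕ) : ATnum (K2n n) = n := by
  cases n with
  | zero =>
    have h : IsAT (K2n 0) 0 := by
      refine ⟨0, ?_, fun i => absurd i.isLt (by omega)⟩
      have : graphPoly (K2n 0) = 1 := by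
        rw [graphPoly]
        rw [Finset.filter_eq_empty_iff.mpr (fun p _ => by exact absurd p.1.isLt (by omega))]
        exact Finset.prod_empty
      rw [this]
      simp
    have := Nat.sInf_le (show 0 ∈ {k | IsAT (K2n 0) k} from h)
    rw [ATnum]
    omega
  | succ N =>
    refine le_antisymm (Nat.sInf_le (ATK2n.isAT_upper N)) ?_
    have hmem : (N+1) ∈ {k | IsAT (K2n (N+1)) k} := ATK2n.isAT_upper N
    exact ATK2n.isAT_lower N _ (Nat.sInf_mem ⟨N+1, hmem⟩)
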